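/- arXiv:1608.05944 — 3 statements merged into one kernel-verified Lean document; each statement's English description precedes it below -/
import Mathlib

section
/- Let 0 < λ < 1, μ = √(1−λ²), a > 0, and define X : ℝ² → ℝ³ by X(u,v) = ( [cosh v·((a²+1)·cos u − (μ − aλ)·sin u·sinh(a u)·sin(a v) − (aμ + λ)·cos u·cosh(a u)·sin(a v)) + sinh v·cos(a v)·((aμ + λ)·sin u·sinh(a u) − (μ − aλ)·cos u·cosh(a u))]/(a²+1) , [cosh v·((a²+1)·sin u − (aμ + λ)·sin u·cosh(a u)·sin(a v) + (μ − aλ)·cos u·sinh(a u)·sin(a v)) − sinh v·cos(a v)·((aμ + λ)·cos u·sinh(a u) + (μ − aλ)·sin u·cosh(a u))]/(a²+1) , λ·u − sinh(a u)·sin(a v)/a ). Then each coordinate function of X is harmonic on ℝ², i.e. ∂²X_k/∂u² + ∂²X_k/∂v² = 0 for k = 1,2,3. -/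
open Real

/-- First coordinate of the helicoidal helicoid with timelike axis. -/
noncomputable def X1 (a lam mu u v : ℝ) : ℝ :=
  (cosh v * ((a^2 + 1) * cos u
      - (mu - a * lam) * sin u * sinh (a*u) * sin (a*v)
      - (a * mu + lam) * cos u * cosh (a*u) * sin (a*v))
   + sinh v * cos (a*v) * ((a * mu + lam) * sin u * sinh (a*u)
      - (mu - a * lam) * cos u * cosh (a*u))) / (a^2 + 1)

/-- Second coordinate of the helicoidal helicoid with timelike axis. -/
noncomputable def X2 (a lam mu u v : ℝ) : ℝ :=
  (cosh v * ((a^2 + 1) * sin u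
      - (a * mu + lam) * sin u * cosh (a*u) * sin (a*v)
      + (mu - a * lam) * cos u * sinh (a*u) * sin (a*v))
   - sinh v * cos (a*v) * ((a * mu + lam) * cos u * sinh (a*u)
      + (mu - a * lam) * sin u * cosh (a*u))) / (a^2 + 1)

/-- Third coordinate of the helicoidal helicoid with timelike axis. -/
noncomputable def X3 (a lam mu u v : ℝ) : ℝ :=
  lam * u - sinh (a*u) * sin (a*v) / a

/-! Auxiliary machinery: two families of functions closed under differentiation. -/

/-- Family `T`: trig in `x` times hyperbolic in `a*x`. -/
noncomputable def Tfam (a A B C D E F : ℝ) : ℝ → ℝ := fun x =>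
  A * Real.cos x + B * Real.sin x
    + (C * Real.cos x + D * Real.sin x) * Real.cosh (a*x)
    + (E * Real.cos x + F * Real.sin x) * Real.sinh (a*x)

/-- Family `G`: hyperbolic in `x` times trig in `a*x`. -/
noncomputable def Gfam (a A B C D E F : ℝ) : ℝ → ℝ := fun x =>
  A * Real.cosh x + B * Real.sinh x
    + (C * Real.cosh x + D * Real.sinh x) * Real.cos (a*x)
    + (E * Real.cosh x + F * Real.sinh x) * Real.sin (a*x)

lemma hasDerivAt_mul_cosh (a x : ℝ) :
    HasDerivAt (fun y => Real.cosh (a*y)) (a * Real.sinh (a*x)) x := by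
  exact ((Real.hasDerivAt_cosh (a*x)).comp x ((hasDerivAt_id x).const_mul a)).congr_deriv (by ring)

lemma hasDerivAt_mul_sinh (a x : ℝ) :
    HasDerivAt (fun y => Real.sinh (a*y)) (a * Real.cosh (a*x)) x := by
  exact ((Real.hasDerivAt_sinh (a*x)).comp x ((hasDerivAt_id x).const_mul a)).congr_deriv (by ring)

lemma hasDerivAt_mul_cos (a x : ℝ) :
    HasDerivAt (fun y => Real.cos (a*y)) (-(a * Real.sin (a*x))) x := by
  exact ((Real.hasDerivAt_cos (a*x)).comp x ((hasDerivAt_id x).const_mul a)).congr_deriv (by ring)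

lemma hasDerivAt_mul_sin (a x : ℝ) :
    HasDerivAt (fun y => Real.sin (a*y)) (a * Real.cos (a*x)) x := by
  exact ((Real.hasDerivAt_sin (a*x)).comp x ((hasDerivAt_id x).const_mul a)).congr_deriv (by ring)

lemma hasDerivAt_Tfam (a A B C D E F x : ℝ) :
    HasDerivAt (Tfam a A B C D E F)
      (Tfam a B (-A) (D + a*E) (a*F - C) (a*C + F) (a*D - E) x) x := by
  have H := ((((Real.hasDerivAt_cos x).const_mul A).add
      ((Real.hasDerivAt_sin x).const_mul B)).add
      ((((Real.hasDerivAt_cos x).const_mul C).add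
        ((Real.hasDerivAt_sin x).const_mul D)).mul (hasDerivAt_mul_cosh a x))).add
      ((((Real.hasDerivAt_cos x).const_mul E).add
        ((Real.hasDerivAt_sin x).const_mul F)).mul (hasDerivAt_mul_sinh a x))
  unfold Tfam
  refine H.congr_deriv ?_
  simp only [Pi.add_apply]
  ring

lemma deriv_Tfam (a A B C D E F : ℝ) :
    deriv (Tfam a A B C D E F)
      = Tfam a B (-A) (D + a*E) (a*F - C) (a*C + F) (a*D - E) := by
  funext x
  exact (hasDerivAt_Tfam a A B C D E F x).deriv

lemma hasDerivAt_Gfam (a A B C D E F x : ℝ) :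
    HasDerivAt (Gfam a A B C D E F)
      (Gfam a B A (D + a*E) (C + a*F) (F - a*C) (E - a*D) x) x := by
  have H := ((((Real.hasDerivAt_cosh x).const_mul A).add
      ((Real.hasDerivAt_sinh x).const_mul B)).add
      ((((Real.hasDerivAt_cosh x).const_mul C).add
        ((Real.hasDerivAt_sinh x).const_mul D)).mul (hasDerivAt_mul_cos a x))).add
      ((((Real.hasDerivAt_cosh x).const_mul E).add
        ((Real.hasDerivAt_sinh x).const_mul F)).mul (hasDerivAt_mul_sin a x))
  unfold Gfam
  refine H.congr_deriv ?_
  simp only [Pi.add_apply]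
  ring

lemma deriv_Gfam (a A B C D E F : ℝ) :
    deriv (Gfam a A B C D E F)
      = Gfam a B A (D + a*E) (C + a*F) (F - a*C) (E - a*D) := by
  funext x
  exact (hasDerivAt_Gfam a A B C D E F x).deriv

/-- Each coordinate function of the helicoidal helicoid with timelike axis is harmonic. -/
theorem helicoidal_helicoid_timelike_harmonic (a lam mu : ℝ)
    (hlam0 : 0 < lam) (hlam1 : lam < 1) (hmu : mu = Real.sqrt (1 - lam^2))
    (ha : 0 < a) (u v : ℝ) :
    deriv (deriv (fun s => X1 a lam mu s v)) u + deriv (deriv (fun t => X1 a lam mu u t)) v = 0 ∧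
    deriv (deriv (fun s => X2 a lam mu s v)) u + deriv (deriv (fun t => X2 a lam mu u t)) v = 0 ∧
    deriv (deriv (fun s => X3 a lam mu s v)) u + deriv (deriv (fun t => X3 a lam mu u t)) v = 0 := by
  have hK : (a^2 + 1) ≠ 0 := by positivity
  have ha' : a ≠ 0 := ne_of_gt ha
  refine ⟨?_, ?_, ?_⟩
  · -- X1
    have e1 : (fun s => X1 a lam mu s v)
        = Tfam a (Real.cosh v) 0
            ((-((a*mu+lam) * Real.sin (a*v) * Real.cosh v)
              - (mu-a*lam) * (Real.sinh v * Real.cos (a*v))) / (a^2+1)) 0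
            0 ((-((mu-a*lam) * Real.sin (a*v) * Real.cosh v)
              + (a*mu+lam) * (Real.sinh v * Real.cos (a*v))) / (a^2+1)) := by
      funext s
      unfold X1 Tfam
      field_simp
      ring
    have e2 : (fun t => X1 a lam mu u t)
        = Gfam a (Real.cos u) 0 0
            (((a*mu+lam) * Real.sin u * Real.sinh (a*u)
              - (mu-a*lam) * Real.cos u * Real.cosh (a*u)) / (a^2+1))
            ((-((mu-a*lam) * Real.sin u * Real.sinh (a*u))
              - (a*mu+lam) * Real.cos u * Real.cosh (a*u)) / (a^2+1)) 0 := by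
      funext t
      unfold X1 Gfam
      field_simp
      ring
    rw [e1, e2, deriv_Tfam, deriv_Tfam, deriv_Gfam, deriv_Gfam]
    unfold Tfam Gfam
    field_simp
    ring
  · -- X2
    have e1 : (fun s => X2 a lam mu s v)
        = Tfam a 0 (Real.cosh v) 0
            ((-((a*mu+lam) * Real.sin (a*v) * Real.cosh v)
              - (mu-a*lam) * (Real.sinh v * Real.cos (a*v))) / (a^2+1))
            (((mu-a*lam) * Real.sin (a*v) * Real.cosh v
              - (a*mu+lam) * (Real.sinh v * Real.cos (a*v))) / (a^2+1)) 0 := by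
      funext s
      unfold X2 Tfam
      field_simp
      ring
    have e2 : (fun t => X2 a lam mu u t)
        = Gfam a (Real.sin u) 0 0
            ((-((a*mu+lam) * Real.cos u * Real.sinh (a*u))
              - (mu-a*lam) * Real.sin u * Real.cosh (a*u)) / (a^2+1))
            ((-((a*mu+lam) * Real.sin u * Real.cosh (a*u))
              + (mu-a*lam) * Real.cos u * Real.sinh (a*u)) / (a^2+1)) 0 := by
      funext t
      unfold X2 Gfam
      field_simp
      ring
    rw [e1, e2, deriv_Tfam, deriv_Tfam, deriv_Gfam, deriv_Gfam]
    unfold Tfam Gfam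
    field_simp
    ring
  · -- X3
    have d1 : deriv (fun s => X3 a lam mu s v)
        = fun s => lam - Real.cosh (a*s) * Real.sin (a*v) := by
      funext s
      refine HasDerivAt.deriv ?_
      have H := ((hasDerivAt_id s).const_mul lam).sub
        (((hasDerivAt_mul_sinh a s).mul_const (Real.sin (a*v))).div_const a)
      unfold X3
      refine H.congr_deriv ?_
      field_simp
    have d2 : deriv (fun s => lam - Real.cosh (a*s) * Real.sin (a*v)) u
        = -(a * Real.sinh (a*u) * Real.sin (a*v)) := by
      refine HasDerivAt.deriv ?_
      have H := (hasDerivAt_const u lam).sub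
        ((hasDerivAt_mul_cosh a u).mul_const (Real.sin (a*v)))
      refine H.congr_deriv ?_
      ring
    have d3 : deriv (fun t => X3 a lam mu u t)
        = fun t => -(Real.sinh (a*u) * Real.cos (a*t)) := by
      funext t
      refine HasDerivAt.deriv ?_
      have H := (hasDerivAt_const t (lam*u)).sub
        (((hasDerivAt_mul_sin a t).const_mul (Real.sinh (a*u))).div_const a)
      unfold X3
      refine H.congr_deriv ?_
      field_simp
      ring
    have d4 : deriv (fun t => -(Real.sinh (a*u) * Real.cos (a*t))) v
        = a * Real.sinh (a*u) * Real.sin (a*v) := by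
      refine HasDerivAt.deriv ?_
      have H := ((hasDerivAt_mul_cos a v).const_mul (Real.sinh (a*u))).neg
      refine H.congr_deriv ?_
      ring
    rw [d1, d3, d2, d4]
    ring
end

section
/- Let 0 < λ < 1, μ = √(1−λ²), a > 0, and define X : ℝ² → ℝ³ by X(u,v) = ( [cosh v·((a²+1)·cos u − (μ − aλ)·sin u·sinh(a u)·sin(a v) − (aμ + λ)·cos u·cosh(a u)·sin(a v)) + sinh v·cos(a v)·((aμ + λ)·sin u·sinh(a u) − (μ − aλ)·cos u·cosh(a u))]/(a²+1) , [cosh v·((a²+1)·sin u − (aμ + λ)·sin u·cosh(a u)·sin(a v) + (μ − aλ)·cos u·sinh(a u)·sin(a v)) − sinh v·cos(a v)·((aμ + λ)·cos u·sinh(a u) + (μ − aλ)·sin u·cosh(a u))]/(a²+1) , λ·u − sinh(a u)·sin(a v)/a ). Then X is Lorentz-conformal: for all (u,v) ∈ ℝ², ⟨X_u, X_u⟩_L = ⟨X_v, X_v⟩_L and ⟨X_u, X_v⟩_L = 0. -/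
open Real

/-- Lorentzian inner product on ℝ³: ⟨p,q⟩ = p₁q₁ + p₂q₂ − p₃q₃. -/
noncomputable def lorentz (p q : ℝ × ℝ × ℝ) : ℝ :=
  p.1 * q.1 + p.2.1 * q.2.1 - p.2.2 * q.2.2

/-- Partial derivative of X with respect to u. -/
noncomputable def Xu (a lam mu u v : ℝ) : ℝ × ℝ × ℝ :=
  (deriv (fun s => X1 a lam mu s v) u, deriv (fun s => X2 a lam mu s v) u,
   deriv (fun s => X3 a lam mu s v) u)

/-- Partial derivative of X with respect to v. -/
noncomputable def Xv (a lam mu u v : ℝ) : ℝ × ℝ × ℝ :=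
  (deriv (fun t => X1 a lam mu u t) v, deriv (fun t => X2 a lam mu u t) v,
   deriv (fun t => X3 a lam mu u t) v)

set_option maxHeartbeats 4000000 in
/-- The helicoidal helicoid with timelike axis is Lorentz-conformal. -/
theorem helicoidal_helicoid_timelike_conformal (a lam mu : ℝ)
    (hlam0 : 0 < lam) (hlam1 : lam < 1) (hmu : mu = Real.sqrt (1 - lam^2))
    (ha : 0 < a) (u v : ℝ) :
    lorentz (Xu a lam mu u v) (Xu a lam mu u v) = lorentz (Xv a lam mu u v) (Xv a lam mu u v) ∧
    lorentz (Xu a lam mu u v) (Xv a lam mu u v) = 0 := by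
  have ha' : a ≠ 0 := ne_of_gt ha
  have hm2 : mu^2 = 1 - lam^2 := by
    rw [hmu, sq_sqrt]; nlinarith
  have hs : sin u ^ 2 = 1 - cos u ^ 2 := by
    have := sin_sq_add_cos_sq u; linarith
  have hC2 : cosh (a*u) ^ 2 = 1 + sinh (a*u) ^ 2 := by
    have := Real.cosh_sq_sub_sinh_sq (a*u); linarith
  have hq2 : cos (a*v) ^ 2 = 1 - sin (a*v) ^ 2 := by
    have := sin_sq_add_cos_sq (a*v); linarith
  have hH2 : cosh v ^ 2 = 1 + sinh v ^ 2 := by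
    have := Real.cosh_sq_sub_sinh_sq v; linarith
  -- atoms
  have hSu : HasDerivAt (fun x : ℝ => sinh (a*x)) (a * cosh (a*u)) u := by
    simpa [mul_comm, Function.comp_def] using (Real.hasDerivAt_sinh (a*u)).comp u ((hasDerivAt_id u).const_mul a)
  have hCu : HasDerivAt (fun x : ℝ => cosh (a*x)) (a * sinh (a*u)) u := by
    simpa [mul_comm, Function.comp_def] using (Real.hasDerivAt_cosh (a*u)).comp u ((hasDerivAt_id u).const_mul a)
  have hpv : HasDerivAt (fun t : ℝ => sin (a*t)) (a * cos (a*v)) v := by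
    simpa [mul_comm, Function.comp_def] using (Real.hasDerivAt_sin (a*v)).comp v ((hasDerivAt_id v).const_mul a)
  have hqv : HasDerivAt (fun t : ℝ => cos (a*t)) (-(a * sin (a*v))) v := by
    have := (Real.hasDerivAt_cos (a*v)).comp v ((hasDerivAt_id v).const_mul a)
    simpa [mul_comm, Function.comp_def] using this
  -- u-derivatives
  have hX1u : HasDerivAt (fun x => X1 a lam mu x v)
      ((cosh v * (a^2+1) * (-sin u)
        + (sinh v * cos (a*v) * (a*mu+lam) - cosh v * ((mu - a*lam) * sin (a*v)))
            * (cos u * sinh (a*u) + sin u * (a * cosh (a*u)))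
        + (-(cosh v * ((a*mu+lam) * sin (a*v)) + sinh v * cos (a*v) * (mu - a*lam)))
            * (-sin u * cosh (a*u) + cos u * (a * sinh (a*u)))) / (a^2+1)) u := by
    have hfun : (fun x => X1 a lam mu x v) = fun x =>
        (cosh v * (a^2+1) * cos x
          + (sinh v * cos (a*v) * (a*mu+lam) - cosh v * ((mu - a*lam) * sin (a*v)))
              * (sin x * sinh (a*x))
          + (-(cosh v * ((a*mu+lam) * sin (a*v)) + sinh v * cos (a*v) * (mu - a*lam)))
              * (cos x * cosh (a*x))) / (a^2+1) := by
      funext x; simp only [X1]; ring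
    rw [hfun]
    exact ((((Real.hasDerivAt_cos u).const_mul _).add
      (((Real.hasDerivAt_sin u).mul hSu).const_mul _)).add
      (((Real.hasDerivAt_cos u).mul hCu).const_mul _)).div_const _
  have hX2u : HasDerivAt (fun x => X2 a lam mu x v)
      ((cosh v * (a^2+1) * cos u
        + (-(cosh v * ((a*mu+lam) * sin (a*v)) + sinh v * cos (a*v) * (mu - a*lam)))
            * (cos u * cosh (a*u) + sin u * (a * sinh (a*u)))
        + (cosh v * ((mu - a*lam) * sin (a*v)) - sinh v * cos (a*v) * (a*mu+lam))
            * (-sin u * sinh (a*u) + cos u * (a * cosh (a*u)))) / (a^2+1)) u := by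
    have hfun : (fun x => X2 a lam mu x v) = fun x =>
        (cosh v * (a^2+1) * sin x
          + (-(cosh v * ((a*mu+lam) * sin (a*v)) + sinh v * cos (a*v) * (mu - a*lam)))
              * (sin x * cosh (a*x))
          + (cosh v * ((mu - a*lam) * sin (a*v)) - sinh v * cos (a*v) * (a*mu+lam))
              * (cos x * sinh (a*x))) / (a^2+1) := by
      funext x; simp only [X2]; ring
    rw [hfun]
    exact ((((Real.hasDerivAt_sin u).const_mul _).add
      (((Real.hasDerivAt_sin u).mul hCu).const_mul _)).add
      (((Real.hasDerivAt_cos u).mul hSu).const_mul _)).div_const _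
  have hX3u : HasDerivAt (fun x => X3 a lam mu x v)
      (lam - sin (a*v) * cosh (a*u)) u := by
    have hfun : (fun x => X3 a lam mu x v) = fun x =>
        lam * x - (sin (a*v) / a) * sinh (a*x) := by
      funext x; simp only [X3]; field_simp; try ring
    rw [hfun]
    have h := ((hasDerivAt_id u).const_mul lam).sub (hSu.const_mul (sin (a*v) / a))
    convert h using 1
    · rfl
    · rfl
    · rfl
    field_simp
    try ring
  -- v-derivatives
  have hX1v : HasDerivAt (fun t => X1 a lam mu u t)
      (((a^2+1) * cos u * sinh v
        + (-((mu - a*lam) * sin u * sinh (a*u) + (a*mu+lam) * cos u * cosh (a*u)))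
            * (sinh v * sin (a*v) + cosh v * (a * cos (a*v)))
        + ((a*mu+lam) * sin u * sinh (a*u) - (mu - a*lam) * cos u * cosh (a*u))
            * (cosh v * cos (a*v) + sinh v * (-(a * sin (a*v))))) / (a^2+1)) v := by
    have hfun : (fun t => X1 a lam mu u t) = fun t =>
        ((a^2+1) * cos u * cosh t
          + (-((mu - a*lam) * sin u * sinh (a*u) + (a*mu+lam) * cos u * cosh (a*u)))
              * (cosh t * sin (a*t))
          + ((a*mu+lam) * sin u * sinh (a*u) - (mu - a*lam) * cos u * cosh (a*u))
              * (sinh t * cos (a*t))) / (a^2+1) := by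
      funext t; simp only [X1]; ring
    rw [hfun]
    exact ((((Real.hasDerivAt_cosh v).const_mul _).add
      (((Real.hasDerivAt_cosh v).mul hpv).const_mul _)).add
      (((Real.hasDerivAt_sinh v).mul hqv).const_mul _)).div_const _
  have hX2v : HasDerivAt (fun t => X2 a lam mu u t)
      (((a^2+1) * sin u * sinh v
        + ((mu - a*lam) * cos u * sinh (a*u) - (a*mu+lam) * sin u * cosh (a*u))
            * (sinh v * sin (a*v) + cosh v * (a * cos (a*v)))
        + (-((a*mu+lam) * cos u * sinh (a*u) + (mu - a*lam) * sin u * cosh (a*u)))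
            * (cosh v * cos (a*v) + sinh v * (-(a * sin (a*v))))) / (a^2+1)) v := by
    have hfun : (fun t => X2 a lam mu u t) = fun t =>
        ((a^2+1) * sin u * cosh t
          + ((mu - a*lam) * cos u * sinh (a*u) - (a*mu+lam) * sin u * cosh (a*u))
              * (cosh t * sin (a*t))
          + (-((a*mu+lam) * cos u * sinh (a*u) + (mu - a*lam) * sin u * cosh (a*u)))
              * (sinh t * cos (a*t))) / (a^2+1) := by
      funext t; simp only [X2]; ring
    rw [hfun]
    exact ((((Real.hasDerivAt_cosh v).const_mul _).add
      (((Real.hasDerivAt_cosh v).mul hpv).const_mul _)).add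
      (((Real.hasDerivAt_sinh v).mul hqv).const_mul _)).div_const _
  have hX3v : HasDerivAt (fun t => X3 a lam mu u t)
      (-(sinh (a*u) * cos (a*v))) v := by
    have hfun : (fun t => X3 a lam mu u t) = fun t =>
        lam * u - (sinh (a*u) / a) * sin (a*t) := by
      funext t; simp only [X3]; field_simp; try ring
    rw [hfun]
    have h := (hasDerivAt_const v (lam * u)).sub (hpv.const_mul (sinh (a*u) / a))
    convert h using 1
    · rfl
    · rfl
    · rfl
    field_simp
    try ring
  have hD : (a:ℝ)^2+1 ≠ 0 := by positivity
  constructor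
  · simp only [lorentz, Xu, Xv]
    rw [hX1u.deriv, hX2u.deriv, hX3u.deriv, hX1v.deriv, hX2v.deriv, hX3v.deriv]
    field_simp
    linear_combination
      (((1:ℝ) * cosh v^2 + (2:ℝ) * cosh v^2 * a^2 + (1:ℝ) * cosh v^2 * a^4 + (-1:ℝ) * sinh v^2 + (-2:ℝ) * sinh v^2 * a^2 + (-1:ℝ) * sinh v^2 * a^4 + (-2:ℝ) * cosh (a*u) * sin (a*v) * cosh v^2 * lam + (-4:ℝ) * cosh (a*u) * sin (a*v) * cosh v^2 * a^2 * lam + (-2:ℝ) * cosh (a*u) * sin (a*v) * cosh v^2 * a^4 * lam + (2:ℝ) * cosh (a*u) * sin (a*v) * sinh v^2 * lam + (4:ℝ) * cosh (a*u) * sin (a*v) * sinh v^2 * a^2 * lam + (2:ℝ) * cosh (a*u) * sin (a*v) * sinh v^2 * a^4 * lam + (-1:ℝ) * cosh (a*u)^2 * cos (a*v)^2 * cosh v^2 * mu^2 + (-2:ℝ) * cosh (a*u)^2 * cos (a*v)^2 * cosh v^2 * a^2 * mu^2 + (-1:ℝ) * cosh (a*u)^2 * cos (a*v)^2 * cosh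 v^2 * a^4 * mu^2 + (1:ℝ) * cosh (a*u)^2 * cos (a*v)^2 * sinh v^2 * mu^2 + (2:ℝ) * cosh (a*u)^2 * cos (a*v)^2 * sinh v^2 * a^2 * mu^2 + (1:ℝ) * cosh (a*u)^2 * cos (a*v)^2 * sinh v^2 * a^4 * mu^2 + (1:ℝ) * cosh (a*u)^2 * sin (a*v)^2 * cosh v^2 * lam^2 + (2:ℝ) * cosh (a*u)^2 * sin (a*v)^2 * cosh v^2 * a^2 * lam^2 + (1:ℝ) * cosh (a*u)^2 * sin (a*v)^2 * cosh v^2 * a^4 * lam^2 + (-1:ℝ) * cosh (a*u)^2 * sin (a*v)^2 * sinh v^2 * lam^2 + (-2:ℝ) * cosh (a*u)^2 * sin (a*v)^2 * sinh v^2 * a^2 * lam^2 + (-1:ℝ) * cosh (a*u)^2 * sin (a*v)^2 * sinh v^2 * a^4 * lam^2 + (-1:ℝ) * sinh (a*u)^2 * cos (a*v)^2 * cosh v^2 * lam^2 + (-2:ℝ) * sinh (a*u)^2 * cos (a*v)^2 * cosh v^2 * a^2 * lam^2 + (-1:ℝ) * sinh (a*u)^2 * cos (a*v)^2 * cosh v^2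 * a^4 * lam^2 + (1:ℝ) * sinh (a*u)^2 * cos (a*v)^2 * sinh v^2 * lam^2 + (2:ℝ) * sinh (a*u)^2 * cos (a*v)^2 * sinh v^2 * a^2 * lam^2 + (1:ℝ) * sinh (a*u)^2 * cos (a*v)^2 * sinh v^2 * a^4 * lam^2 + (1:ℝ) * sinh (a*u)^2 * sin (a*v)^2 * cosh v^2 * mu^2 + (2:ℝ) * sinh (a*u)^2 * sin (a*v)^2 * cosh v^2 * a^2 * mu^2 + (1:ℝ) * sinh (a*u)^2 * sin (a*v)^2 * cosh v^2 * a^4 * mu^2 + (-1:ℝ) * sinh (a*u)^2 * sin (a*v)^2 * sinh v^2 * mu^2 + (-2:ℝ) * sinh (a*u)^2 * sin (a*v)^2 * sinh v^2 * a^2 * mu^2 + (-1:ℝ) * sinh (a*u)^2 * sin (a*v)^2 * sinh v^2 * a^4 * mu^2) ) * hs +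
      (((-1:ℝ) * cos (a*v)^2 * cosh v^2 * mu^2 + (-2:ℝ) * cos (a*v)^2 * cosh v^2 * a^2 * mu^2 + (-1:ℝ) * cos (a*v)^2 * cosh v^2 * a^4 * mu^2 + (1:ℝ) * cos (a*v)^2 * sinh v^2 * mu^2 + (2:ℝ) * cos (a*v)^2 * sinh v^2 * a^2 * mu^2 + (1:ℝ) * cos (a*v)^2 * sinh v^2 * a^4 * mu^2 + (-1:ℝ) * sin (a*v)^2 + (-2:ℝ) * sin (a*v)^2 * a^2 + (-1:ℝ) * sin (a*v)^2 * a^4 + (1:ℝ) * sin (a*v)^2 * cosh v^2 * lam^2 + (2:ℝ) * sin (a*v)^2 * cosh v^2 * a^2 * lam^2 + (1:ℝ) * sin (a*v)^2 * cosh v^2 * a^4 * lam^2 + (-1:ℝ) * sin (a*v)^2 * sinh v^2 * lam^2 + (-2:ℝ) * sin (a*v)^2 * sinh v^2 * a^2 * lam^2 + (-1:ℝ) * sin (a*v)^2 * sinh v^2 * a^4 * lam^2) ) * hC2 +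
      (((-1:ℝ) * cosh v^2 * mu^2 + (-2:ℝ) * cosh v^2 * a^2 * mu^2 + (-1:ℝ) * cosh v^2 * a^4 * mu^2 + (1:ℝ) * sinh v^2 * mu^2 + (2:ℝ) * sinh v^2 * a^2 * mu^2 + (1:ℝ) * sinh v^2 * a^4 * mu^2 + (1:ℝ) * sinh (a*u)^2 + (2:ℝ) * sinh (a*u)^2 * a^2 + (1:ℝ) * sinh (a*u)^2 * a^4 + (-1:ℝ) * sinh (a*u)^2 * cosh v^2 * mu^2 + (-1:ℝ) * sinh (a*u)^2 * cosh v^2 * lam^2 + (-2:ℝ) * sinh (a*u)^2 * cosh v^2 * a^2 * mu^2 + (-2:ℝ) * sinh (a*u)^2 * cosh v^2 * a^2 * lam^2 + (-1:ℝ) * sinh (a*u)^2 * cosh v^2 * a^4 * mu^2 + (-1:ℝ) * sinh (a*u)^2 * cosh v^2 * a^4 * lam^2 + (1:ℝ) * sinh (a*u)^2 * sinh v^2 * mu^2 + (1:ℝ) * sinh (a*u)^2 * sinh v^2 * lam^2 + (2:ℝ) * sinh (a*u)^2 * sinh v^2 * a^2 * mu^2 + (2:ℝ) * sinh (a*u)^2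 * sinh v^2 * a^2 * lam^2 + (1:ℝ) * sinh (a*u)^2 * sinh v^2 * a^4 * mu^2 + (1:ℝ) * sinh (a*u)^2 * sinh v^2 * a^4 * lam^2) ) * hq2 +
      (((1:ℝ) + (-1:ℝ) * mu^2 + (2:ℝ) * a^2 + (-2:ℝ) * a^2 * mu^2 + (1:ℝ) * a^4 + (-1:ℝ) * a^4 * mu^2 + (1:ℝ) * sin (a*v)^2 * mu^2 + (1:ℝ) * sin (a*v)^2 * lam^2 + (2:ℝ) * sin (a*v)^2 * a^2 * mu^2 + (2:ℝ) * sin (a*v)^2 * a^2 * lam^2 + (1:ℝ) * sin (a*v)^2 * a^4 * mu^2 + (1:ℝ) * sin (a*v)^2 * a^4 * lam^2 + (-2:ℝ) * cosh (a*u) * sin (a*v) * lam + (-4:ℝ) * cosh (a*u) * sin (a*v) * a^2 * lam + (-2:ℝ) * cosh (a*u) * sin (a*v) * a^4 * lam + (-1:ℝ) * sinh (a*u)^2 * mu^2 + (-1:ℝ) * sinh (a*u)^2 * lam^2 + (-2:ℝ) * sinh (a*u)^2 * a^2 * mu^2 + (-2:ℝ) * sinh (a*u)^2 * a^2 * lam^2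 + (-1:ℝ) * sinh (a*u)^2 * a^4 * mu^2 + (-1:ℝ) * sinh (a*u)^2 * a^4 * lam^2 + (2:ℝ) * sinh (a*u)^2 * sin (a*v)^2 * mu^2 + (2:ℝ) * sinh (a*u)^2 * sin (a*v)^2 * lam^2 + (4:ℝ) * sinh (a*u)^2 * sin (a*v)^2 * a^2 * mu^2 + (4:ℝ) * sinh (a*u)^2 * sin (a*v)^2 * a^2 * lam^2 + (2:ℝ) * sinh (a*u)^2 * sin (a*v)^2 * a^4 * mu^2 + (2:ℝ) * sinh (a*u)^2 * sin (a*v)^2 * a^4 * lam^2) ) * hH2 +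
      (((-1:ℝ) + (-2:ℝ) * a^2 + (-1:ℝ) * a^4 + (1:ℝ) * sin (a*v)^2 + (2:ℝ) * sin (a*v)^2 * a^2 + (1:ℝ) * sin (a*v)^2 * a^4 + (-1:ℝ) * sinh (a*u)^2 + (-2:ℝ) * sinh (a*u)^2 * a^2 + (-1:ℝ) * sinh (a*u)^2 * a^4 + (2:ℝ) * sinh (a*u)^2 * sin (a*v)^2 + (4:ℝ) * sinh (a*u)^2 * sin (a*v)^2 * a^2 + (2:ℝ) * sinh (a*u)^2 * sin (a*v)^2 * a^4) ) * hm2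
  · simp only [lorentz, Xu, Xv]
    rw [hX1u.deriv, hX2u.deriv, hX3u.deriv, hX1v.deriv, hX2v.deriv, hX3v.deriv]
    field_simp
    linear_combination
      (((-1:ℝ) * sinh (a*u) * cos (a*v) * cosh v^2 * lam + (-2:ℝ) * sinh (a*u) * cos (a*v) * cosh v^2 * a^2 * lam + (-1:ℝ) * sinh (a*u) * cos (a*v) * cosh v^2 * a^4 * lam + (1:ℝ) * sinh (a*u) * cos (a*v) * sinh v^2 * lam + (2:ℝ) * sinh (a*u) * cos (a*v) * sinh v^2 * a^2 * lam + (1:ℝ) * sinh (a*u) * cos (a*v) * sinh v^2 * a^4 * lam + (1:ℝ) * sinh (a*u) * cosh (a*u) * sin (a*v) * cos (a*v) * cosh v^2 * mu^2 + (1:ℝ) * sinh (a*u) * cosh (a*u) * sin (a*v) * cos (a*v) * cosh v^2 * lam^2 + (2:ℝ) * sinh (a*u) * cosh (a*u) * sin (a*v) * cos (a*v) * cosh v^2 * a^2 * mu^2 + (2:ℝ) * sinh (a*u) * cosh (a*u) * sin (a*v) * cos (a*v) * cosh v^2 * a^2 * lam^2 + (1:ℝ) * sinh (a*u) * cosh (a*u)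 * sin (a*v) * cos (a*v) * cosh v^2 * a^4 * mu^2 + (1:ℝ) * sinh (a*u) * cosh (a*u) * sin (a*v) * cos (a*v) * cosh v^2 * a^4 * lam^2 + (-1:ℝ) * sinh (a*u) * cosh (a*u) * sin (a*v) * cos (a*v) * sinh v^2 * mu^2 + (-1:ℝ) * sinh (a*u) * cosh (a*u) * sin (a*v) * cos (a*v) * sinh v^2 * lam^2 + (-2:ℝ) * sinh (a*u) * cosh (a*u) * sin (a*v) * cos (a*v) * sinh v^2 * a^2 * mu^2 + (-2:ℝ) * sinh (a*u) * cosh (a*u) * sin (a*v) * cos (a*v) * sinh v^2 * a^2 * lam^2 + (-1:ℝ) * sinh (a*u) * cosh (a*u) * sin (a*v) * cos (a*v) * sinh v^2 * a^4 * mu^2 + (-1:ℝ) * sinh (a*u) * cosh (a*u) * sin (a*v) * cos (a*v) * sinh v^2 * a^4 * lam^2) ) * hs +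
      (((-1:ℝ) * sinh (a*u) * cos (a*v) * lam + (-2:ℝ) * sinh (a*u) * cos (a*v) * a^2 * lam + (-1:ℝ) * sinh (a*u) * cos (a*v) * a^4 * lam + (1:ℝ) * sinh (a*u) * cosh (a*u) * sin (a*v) * cos (a*v) * mu^2 + (1:ℝ) * sinh (a*u) * cosh (a*u) * sin (a*v) * cos (a*v) * lam^2 + (2:ℝ) * sinh (a*u) * cosh (a*u) * sin (a*v) * cos (a*v) * a^2 * mu^2 + (2:ℝ) * sinh (a*u) * cosh (a*u) * sin (a*v) * cos (a*v) * a^2 * lam^2 + (1:ℝ) * sinh (a*u) * cosh (a*u) * sin (a*v) * cos (a*v) * a^4 * mu^2 + (1:ℝ) * sinh (a*u) * cosh (a*u) * sin (a*v) * cos (a*v) * a^4 * lam^2) ) * hH2 +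
      (((1:ℝ) * sinh (a*u) * cosh (a*u) * sin (a*v) * cos (a*v) + (2:ℝ) * sinh (a*u) * cosh (a*u) * sin (a*v) * cos (a*v) * a^2 + (1:ℝ) * sinh (a*u) * cosh (a*u) * sin (a*v) * cos (a*v) * a^4) ) * hm2
end

section
/- Let 0 < λ < 1, μ = √(1−λ²), a > 0, and let X : ℝ² → ℝ³ be defined by X(u,v) = ( [cosh v·((a²+1)·cos u − (μ − aλ)·sin u·sinh(a u)·sin(a v) − (aμ + λ)·cos u·cosh(a u)·sin(a v)) + sinh v·cos(a v)·((aμ + λ)·sin u·sinh(a u) − (μ − aλ)·cos u·cosh(a u))]/(a²+1) , [cosh v·((a²+1)·sin u − (aμ + λ)·sin u·cosh(a u)·sin(a v) + (μ − aλ)·cos u·sinh(a u)·sin(a v)) − sinh v·cos(a v)·((aμ + λ)·cos u·sinh(a u) + (μ − aλ)·sin u·cosh(a u))]/(a²+1) , λ·u − sinh(a u)·sin(a v)/a ). Then for every u ∈ ℝ: (i) X(u,0) = (cos u, sin u, λ·u); and (ii) the vector V(u) = ( (λ/μ)·sin u·cosh(a u) − cos u·sinh(a u) , −(λ/μ)·cos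 u·cosh(a u) − sin u·sinh(a u) , −cosh(a u)/μ ) satisfies ⟨V(u),V(u)⟩_L = −1, ⟨V(u), ∂X/∂u (u,0)⟩_L = 0 and ⟨V(u), ∂X/∂v (u,0)⟩_L = 0. -/
open Real

/-- The Björling data normal field. -/
noncomputable def V (a lam mu u : ℝ) : ℝ × ℝ × ℝ :=
  ((lam / mu) * sin u * cosh (a*u) - cos u * sinh (a*u),
   -(lam / mu) * cos u * cosh (a*u) - sin u * sinh (a*u),
   - cosh (a*u) / mu)

/-- General derivative lemma for the canonical shape of the first two coordinates. -/
lemma key_hasDerivAt (a c K1 K2 K3 : ℝ) :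
    HasDerivAt (fun t => (Real.cosh t * (K1 - K2 * Real.sin (a*t))
      + Real.sinh t * Real.cos (a*t) * K3) / c) ((K3 - a * K2) / c) 0 := by
  have h1 : HasDerivAt (fun t : ℝ => a * t) a 0 := by
    simpa using (hasDerivAt_id (0:ℝ)).const_mul a
  have hsin : HasDerivAt (fun t : ℝ => Real.sin (a*t)) (Real.cos (a*0) * a) 0 := h1.sin
  have hcos : HasDerivAt (fun t : ℝ => Real.cos (a*t)) (-Real.sin (a*0) * a) 0 := h1.cos
  have hch : HasDerivAt Real.cosh (Real.sinh 0) 0 := Real.hasDerivAt_cosh 0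
  have hsh : HasDerivAt Real.sinh (Real.cosh 0) 0 := Real.hasDerivAt_sinh 0
  have H := ((hch.mul (((hasDerivAt_const (0:ℝ) K1)).sub (hsin.const_mul K2))).add
      ((hsh.mul hcos).mul_const K3)).div_const c
  refine H.congr_deriv ?_
  simp [Real.sinh_zero, Real.cosh_zero]
  ring

lemma X1_v_hasDerivAt (a lam mu u : ℝ) :
    HasDerivAt (fun t => X1 a lam mu u t)
      (lam * sin u * sinh (a*u) - mu * cos u * cosh (a*u)) 0 := by
  have hfun : (fun t => X1 a lam mu u t) =
      (fun t => (Real.cosh t * ((a^2+1) * cos u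
          - ((mu - a*lam) * sin u * sinh (a*u) + (a*mu + lam) * cos u * cosh (a*u))
            * Real.sin (a*t))
        + Real.sinh t * Real.cos (a*t)
          * ((a*mu + lam) * sin u * sinh (a*u) - (mu - a*lam) * cos u * cosh (a*u)))
        / (a^2+1)) := by
    funext t; simp only [X1]; ring
  rw [hfun]
  have H := key_hasDerivAt a (a^2+1) ((a^2+1) * cos u)
    ((mu - a*lam) * sin u * sinh (a*u) + (a*mu + lam) * cos u * cosh (a*u))
    ((a*mu + lam) * sin u * sinh (a*u) - (mu - a*lam) * cos u * cosh (a*u))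
  convert H using 1
  have hc : (a:ℝ)^2 + 1 ≠ 0 := by positivity
  field_simp
  ring

lemma X2_v_hasDerivAt (a lam mu u : ℝ) :
    HasDerivAt (fun t => X2 a lam mu u t)
      (-(mu * sin u * cosh (a*u)) - lam * cos u * sinh (a*u)) 0 := by
  have hfun : (fun t => X2 a lam mu u t) =
      (fun t => (Real.cosh t * ((a^2+1) * sin u
          - ((a*mu + lam) * sin u * cosh (a*u) - (mu - a*lam) * cos u * sinh (a*u))
            * Real.sin (a*t))
        + Real.sinh t * Real.cos (a*t)
          * (-((a*mu + lam) * cos u * sinh (a*u) + (mu - a*lam) * sin u * cosh (a*u))))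
        / (a^2+1)) := by
    funext t; simp only [X2]; ring
  rw [hfun]
  have H := key_hasDerivAt a (a^2+1) ((a^2+1) * sin u)
    ((a*mu + lam) * sin u * cosh (a*u) - (mu - a*lam) * cos u * sinh (a*u))
    (-((a*mu + lam) * cos u * sinh (a*u) + (mu - a*lam) * sin u * cosh (a*u)))
  convert H using 1
  have hc : (a:ℝ)^2 + 1 ≠ 0 := by positivity
  field_simp
  ring

lemma X3_v_hasDerivAt (a lam mu u : ℝ) (ha : a ≠ 0) :
    HasDerivAt (fun t => X3 a lam mu u t) (-sinh (a*u)) 0 := by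
  have h1 : HasDerivAt (fun t : ℝ => a * t) a 0 := by
    simpa using (hasDerivAt_id (0:ℝ)).const_mul a
  have hsin : HasDerivAt (fun t : ℝ => Real.sin (a*t)) (Real.cos (a*0) * a) 0 := h1.sin
  have H := (hasDerivAt_const (0:ℝ) (lam * u)).sub
    ((hsin.const_mul (sinh (a*u))).div_const a)
  have hfun : (fun t => X3 a lam mu u t) =
      (fun t => lam * u - sinh (a*u) * Real.sin (a*t) / a) := by
    funext t; simp only [X3]
  rw [hfun]
  refine H.congr_deriv ?_
  field_simp
  simp

/-- The helicoidal helicoid with timelike axis contains the helix (cos u, sin u, λu) and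
V(u) is a unit timelike vector field normal to the surface along it. -/
theorem helicoidal_helicoid_timelike_bjorling (a lam mu : ℝ)
    (hlam0 : 0 < lam) (hlam1 : lam < 1) (hmu : mu = Real.sqrt (1 - lam^2))
    (ha : 0 < a) (u : ℝ) :
    (X1 a lam mu u 0, X2 a lam mu u 0, X3 a lam mu u 0) = (cos u, sin u, lam * u) ∧
    lorentz (V a lam mu u) (V a lam mu u) = -1 ∧
    lorentz (V a lam mu u) (Xu a lam mu u 0) = 0 ∧
    lorentz (V a lam mu u) (Xv a lam mu u 0) = 0 := by
  have hc : (a:ℝ)^2 + 1 ≠ 0 := by positivity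
  have hmupos : 0 < mu := by
    rw [hmu]; apply Real.sqrt_pos.2; nlinarith
  have hmune : mu ≠ 0 := ne_of_gt hmupos
  have hmu2 : mu^2 = 1 - lam^2 := by
    rw [hmu]; exact Real.sq_sqrt (by nlinarith)
  -- values at v = 0
  have hX1 : ∀ s, X1 a lam mu s 0 = cos s := by
    intro s; simp [X1]; field_simp
  have hX2 : ∀ s, X2 a lam mu s 0 = sin s := by
    intro s; simp [X2]; field_simp
  have hX3 : ∀ s, X3 a lam mu s 0 = lam * s := by
    intro s; simp [X3]
  -- Xu at v = 0
  have hXu : Xu a lam mu u 0 = (-sin u, cos u, lam) := by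
    simp only [Xu]
    have e1 : (fun s => X1 a lam mu s 0) = Real.cos := funext hX1
    have e2 : (fun s => X2 a lam mu s 0) = Real.sin := funext hX2
    have e3 : (fun s => X3 a lam mu s 0) = (fun s => lam * s) := funext hX3
    rw [e1, e2, e3]
    have hd : deriv (fun s => lam * s) u = lam := by
      simpa using ((hasDerivAt_id u).const_mul lam).deriv
    simp [Real.deriv_cos, Real.deriv_sin, hd]
  -- Xv at v = 0
  have hXv : Xv a lam mu u 0 =
      (lam * sin u * sinh (a*u) - mu * cos u * cosh (a*u),
       -(mu * sin u * cosh (a*u)) - lam * cos u * sinh (a*u),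
       -sinh (a*u)) := by
    simp only [Xv]
    rw [(X1_v_hasDerivAt a lam mu u).deriv, (X2_v_hasDerivAt a lam mu u).deriv,
      (X3_v_hasDerivAt a lam mu u (ne_of_gt ha)).deriv]
  have hpyth : sin u ^ 2 + cos u ^ 2 = 1 := Real.sin_sq_add_cos_sq u
  have hhyp : cosh (a*u) ^ 2 - sinh (a*u) ^ 2 = 1 := Real.cosh_sq_sub_sinh_sq (a*u)
  refine ⟨by rw [hX1, hX2, hX3], ?_, ?_, ?_⟩
  · simp only [lorentz, V]
    field_simp
    linear_combination (lam^2 * cosh (a*u)^2 + mu^2 * sinh (a*u)^2) * hpyth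
      + (sinh (a*u)^2 + 1) * hmu2 + (lam^2 - 1) * hhyp
  · rw [hXu]
    simp only [lorentz, V]
    field_simp
    linear_combination (-(lam * cosh (a*u))) * hpyth
  · rw [hXv]
    simp only [lorentz, V]
    field_simp
    linear_combination ((lam^2 + mu^2) * cosh (a*u) * sinh (a*u)) * hpyth
      + (cosh (a*u) * sinh (a*u)) * hmu2
end
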